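/- Let m ≥ 3 and let G be a group with center containing an element c of order m such that for every g ∈ G ∖ {e}, either g ∈ {c, c², …, c^{m−1}} or g^m ∈ {c, c², …, c^{m−1}}. Then G is non-uniformizable: every group filter φ on G with ∩φ = {e} is principal (i.e., {e} ∈ φ). -/

import Mathlib

open Pointwise

/-- A (proper) group filter on `G`. -/
def IsGroupFilter {G : Type*} [Group G] (φ : Set (Set G)) : Prop :=
  Set.univ ∈ φ ∧ ∅ ∉ φ ∧
  (∀ A ∈ φ, ∀ B ∈ φ, A ∩ B ∈ φ) ∧
  (∀ A ∈ φ, ∀ B : Set G, A ⊆ B → B ∈ φ) ∧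
  (∀ A ∈ φ, ∃ B ∈ φ, B * B⁻¹ ⊆ A)

/-- Every member of a group filter contains the identity. -/
lemma gf_one_mem {G : Type*} [Group G] {φ : Set (Set G)} (hφ : IsGroupFilter φ)
    {A : Set G} (hA : A ∈ φ) : (1 : G) ∈ A := by
  obtain ⟨B, hB, hBA⟩ := hφ.2.2.2.2 A hA
  have hBne : B.Nonempty := by
    rcases Set.eq_empty_or_nonempty B with h | h
    · exact absurd (h ▸ hB) hφ.2.1
    · exact h
  obtain ⟨b, hb⟩ := hBne
  have : (1 : G) = b * b⁻¹ := by group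
  rw [this]
  exact hBA (Set.mul_mem_mul hb (Set.inv_mem_inv.mpr hb))

/-- From any member of a group filter, we can find a member whose square is inside it. -/
lemma gf_sq {G : Type*} [Group G] {φ : Set (Set G)} (hφ : IsGroupFilter φ)
    {A : Set G} (hA : A ∈ φ) : ∃ C ∈ φ, C ⊆ A ∧ C * C ⊆ A := by
  obtain ⟨B, hB, hBA⟩ := hφ.2.2.2.2 A hA
  obtain ⟨C, hC, hCB⟩ := hφ.2.2.2.2 B hB
  have h1C : (1 : G) ∈ C := gf_one_mem hφ hC
  have hCsubB : C ⊆ B := fun x hx => by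
    have : x = x * (1 : G)⁻¹ := by group
    rw [this]
    exact hCB (Set.mul_mem_mul hx (Set.inv_mem_inv.mpr h1C))
  have hCsubBinv : C ⊆ B⁻¹ := fun x hx => by
    have hxinv : x⁻¹ ∈ B := by
      have : x⁻¹ = 1 * x⁻¹ := by group
      rw [this]
      exact hCB (Set.mul_mem_mul h1C (Set.inv_mem_inv.mpr hx))
    exact Set.mem_inv.mpr (by simp [hxinv])
  have hBsubA : B ⊆ A := fun x hx => by
    have h1B : (1 : G) ∈ B := gf_one_mem hφ hB
    have : x = x * (1 : G)⁻¹ := by group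
    rw [this]
    exact hBA (Set.mul_mem_mul hx (Set.inv_mem_inv.mpr h1B))
  refine ⟨C, hC, fun x hx => hBsubA (hCsubB hx), ?_⟩
  intro x hx
  obtain ⟨a, ha, b, hb, rfl⟩ := hx
  exact hBA (Set.mul_mem_mul (hCsubB ha) (hCsubBinv hb))

/-- Iterated squaring: powers of members stay inside. -/
lemma gf_pow2 {G : Type*} [Group G] {φ : Set (Set G)} (hφ : IsGroupFilter φ)
    {A : Set G} (hA : A ∈ φ) (n : ℕ) : ∃ B ∈ φ, B ⊆ A ∧ B ^ (2 ^ n) ⊆ A := by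
  induction n with
  | zero => exact ⟨A, hA, subset_rfl, by simpa using subset_rfl⟩
  | succ n ih =>
    obtain ⟨B, hB, hBA, hBpow⟩ := ih
    obtain ⟨C, hC, hCB, hCC⟩ := gf_sq hφ hB
    refine ⟨C, hC, fun x hx => hBA (hCB hx), ?_⟩
    have : C ^ 2 ^ (n + 1) = (C * C) ^ 2 ^ n := by
      rw [← sq, ← pow_mul, pow_succ, Nat.mul_comm]
    rw [this]
    exact (Set.pow_subset_pow_left hCC).trans hBpow

lemma gf_pow_le {G : Type*} [Group G] {B : Set G} (h1 : (1 : G) ∈ B) {a b : ℕ}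
    (hab : a ≤ b) : B ^ a ⊆ B ^ b := by
  intro x hx
  have : B ^ a * B ^ (b - a) = B ^ b := by rw [← pow_add]; congr 1; omega
  rw [← this]
  have h1p : (1 : G) ∈ B ^ (b - a) := by
    simpa using (Set.pow_mem_pow h1 : (1:G)^(b-a) ∈ _)
  simpa using Set.mul_mem_mul hx h1p

theorem stmt19 {G : Type*} [Group G] (m : ℕ) (hm : 3 ≤ m) (c : G)
    (hc : c ∈ Subgroup.center G) (hord : orderOf c = m)
    (hG : ∀ g : G, g ≠ 1 →
      (∃ k, 1 ≤ k ∧ k ≤ m - 1 ∧ g = c ^ k) ∨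
      (∃ k, 1 ≤ k ∧ k ≤ m - 1 ∧ g ^ m = c ^ k))
    (φ : Set (Set G)) (hφ : IsGroupFilter φ) (hsep : ⋂₀ φ = {(1 : G)}) :
    {(1 : G)} ∈ φ := by
  -- powers c^k for 1 ≤ k ≤ m-1 are nontrivial
  have hck : ∀ k : ℕ, 1 ≤ k → k ≤ m - 1 → c ^ k ≠ 1 := by
    intro k hk1 hk2 h
    have hdvd : m ∣ k := hord ▸ orderOf_dvd_of_pow_eq_one h
    have := Nat.le_of_dvd (by omega) hdvd
    omega
  -- find a member of φ avoiding all c^k, 1 ≤ k ≤ m-1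
  have key : ∀ n : ℕ, n ≤ m - 1 → ∃ A ∈ φ, ∀ k, 1 ≤ k → k ≤ n → c ^ k ∉ A := by
    intro n
    induction n with
    | zero => intro _; exact ⟨Set.univ, hφ.1, fun k hk1 hk2 => by omega⟩
    | succ n ih =>
      intro hn
      obtain ⟨A, hA, hAprop⟩ := ih (by omega)
      have hne : c ^ (n + 1) ≠ 1 := hck (n + 1) (by omega) hn
      have : c ^ (n + 1) ∉ ⋂₀ φ := by rw [hsep]; simpa using hne
      obtain ⟨A', hA', hcA'⟩ := by
        simpa [Set.mem_sInter] using this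
      refine ⟨A ∩ A', hφ.2.2.1 A hA A' hA', fun k hk1 hk2 => ?_⟩
      rcases Nat.lt_or_ge k (n + 1) with h | h
      · exact fun hmem => hAprop k hk1 (by omega) hmem.1
      · have : k = n + 1 := by omega
        subst this
        exact fun hmem => hcA' hmem.2
  obtain ⟨A, hA, hAavoid⟩ := key (m - 1) le_rfl
  -- shrink to B with B^m ⊆ A
  obtain ⟨B, hB, hBA, hBpow⟩ := gf_pow2 hφ hA m
  have h1B : (1 : G) ∈ B := gf_one_mem hφ hB
  have hBm : B ^ m ⊆ A := by
    refine (gf_pow_le h1B ?_).trans hBpow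
    exact (Nat.lt_two_pow_self (n := m)).le
  -- B ⊆ {1}
  have hBone : B ⊆ {(1 : G)} := by
    intro g hg
    by_contra hg1
    have hg1' : g ≠ 1 := by simpa using hg1
    rcases hG g hg1' with ⟨k, hk1, hk2, hgk⟩ | ⟨k, hk1, hk2, hgk⟩
    · exact hAavoid k hk1 hk2 (hgk ▸ hBA hg)
    · exact hAavoid k hk1 hk2 (hgk ▸ hBm (Set.pow_mem_pow hg))
  exact hφ.2.2.2.1 B hB {(1 : G)} hBone
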